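/- Let G be a group with descending q-central sequence G^(i) and set G^[3] = G/G^(3). Then there is a central extension 1 → ([G,G]/([[G,G],G]·([G,G] ∩ G^{q²})))/q → G^[3] → (G/[G,G])/q² → 1; in particular the image of [G,G] in G^[3] is central in G^[3] and is annihilated by q, and the quotient of G^[3] by this image is isomorphic to G_ab/q² (the abelianization modulo q²-th powers). -/

import Mathlib

/-- The commutator convention of the paper: `[x,y] = x⁻¹y⁻¹xy`. -/
def pComm {G : Type*} [Group G] (x y : G) : G := x⁻¹ * y⁻¹ * x * y

/-- The subgroup generated by `q`-th powers of elements of `H`. -/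
def qPow {G : Type*} [Group G] (q : ℕ) (H : Subgroup G) : Subgroup G :=
  Subgroup.closure {x : G | ∃ h ∈ H, x = h ^ q}

/-- `H^q [H,G]`: the subgroup generated by `q`-th powers of elements of `H`
together with all commutators `[h,g]`, `h ∈ H`, `g ∈ G`. -/
def qVerbal {G : Type*} [Group G] (q : ℕ) (H : Subgroup G) : Subgroup G :=
  Subgroup.closure ({x : G | ∃ h ∈ H, x = h ^ q} ∪
    {x : G | ∃ h ∈ H, ∃ g : G, x = pComm h g})

/-- The descending q-central sequence; `qcs q G i` is `G^(i+1)` in the paper's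
(1-based) notation, i.e. `qcs q G 0 = G` and `qcs q G (i+1) = (G^(i+1))^q [G^(i+1), G]`. -/
def qcs (q : ℕ) (G : Type*) [Group G] : ℕ → Subgroup G
  | 0 => ⊤
  | i + 1 => qVerbal q (qcs q G i)

theorem qVerbal_normal {G : Type*} [Group G] (q : ℕ) {H : Subgroup G} (hH : H.Normal) :
    (qVerbal q H).Normal := by
  constructor
  intro n hn g
  set S : Set G := {x : G | ∃ h ∈ H, x = h ^ q} ∪ {x : G | ∃ h ∈ H, ∃ g : G, x = pComm h g} with hS
  have himg : (MulAut.conj g) '' S ⊆ (Subgroup.closure S : Set G) := by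
    rintro _ ⟨x, hx, rfl⟩
    rcases hx with ⟨h, hh, rfl⟩ | ⟨h, hh, g', rfl⟩
    · have : (MulAut.conj g) (h ^ q) = (g * h * g⁻¹) ^ q := by
        simp [MulAut.conj_apply, conj_pow]
      rw [this]
      exact Subgroup.subset_closure (Or.inl ⟨g * h * g⁻¹, hH.conj_mem h hh g, rfl⟩)
    · have : (MulAut.conj g) (pComm h g') = pComm (g * h * g⁻¹) (g * g' * g⁻¹) := by
        simp only [MulAut.conj_apply, pComm]
        group
      rw [this]
      exact Subgroup.subset_closure
        (Or.inr ⟨g * h * g⁻¹, hH.conj_mem h hh g, g * g' * g⁻¹, rfl⟩)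
  have h1 : (Subgroup.closure S).map (MulAut.conj g).toMonoidHom ≤ Subgroup.closure S := by
    rw [MonoidHom.map_closure]
    exact (Subgroup.closure_le _).2 himg
  exact h1 ⟨n, hn, by simp [MulAut.conj_apply]⟩

instance qcs_normal (q : ℕ) (G : Type*) [Group G] (i : ℕ) : (qcs q G i).Normal := by
  induction i with
  | zero => exact ⟨fun n _ g => Subgroup.mem_top _⟩
  | succ i ih => exact qVerbal_normal q ih

lemma mem_qcs_succ_pow {G : Type*} [Group G] (q i : ℕ) {h : G} (hh : h ∈ qcs q G i) :
    h ^ q ∈ qcs q G (i + 1) := Subgroup.subset_closure (Or.inl ⟨h, hh, rfl⟩)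

lemma mem_qcs_succ_comm {G : Type*} [Group G] (q i : ℕ) {h : G} (hh : h ∈ qcs q G i) (g : G) :
    pComm h g ∈ qcs q G (i + 1) := Subgroup.subset_closure (Or.inr ⟨h, hh, g, rfl⟩)

open scoped commutatorElement in
lemma pComm_eq {G : Type*} [Group G] (a b : G) : pComm a b = ⁅a⁻¹, b⁻¹⁆ := by
  simp [pComm, commutatorElement_def]

lemma pComm_mem_commutator {G : Type*} [Group G] (a b : G) : pComm a b ∈ commutator G := by
  rw [pComm_eq]
  exact Subgroup.commutator_mem_commutator (Subgroup.mem_top _) (Subgroup.mem_top _)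

open scoped commutatorElement in
lemma commutator_le_qcs_one {G : Type*} [Group G] (q : ℕ) : commutator G ≤ qcs q G 1 := by
  rw [commutator_eq_closure]
  refine (Subgroup.closure_le _).2 ?_
  rintro _ ⟨a, b, rfl⟩
  have : ⁅a, b⁆ = pComm a⁻¹ b⁻¹ := by simp [pComm_eq]
  rw [this]
  exact mem_qcs_succ_comm q 0 (Subgroup.mem_top _) _


/-- Central extension
`1 → ([G,G]/([[G,G],G]·([G,G] ∩ G^{q²})))/q → G^[3] → G_ab/q² → 1` :
with `G^[3] = G ⧸ G^(3)` (here `G^(3) = qcs q G 2`), the image `K` of `[G,G]`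
in `G^[3]` is central, annihilated by `q`, and `G^[3]/K` is isomorphic to the
abelianization of `G` modulo `q²`-th powers. -/
theorem central_extension_G3 {G : Type*} [Group G] (p d q : ℕ) (hp : p.Prime)
    (hd : 1 ≤ d) (hq : q = p ^ d) :
    ∀ K : Subgroup (G ⧸ qcs q G 2),
      K = (commutator G).map (QuotientGroup.mk' (qcs q G 2)) →
      (∀ x ∈ K, ∀ y : G ⧸ qcs q G 2, x * y = y * x) ∧
      (∀ x ∈ K, x ^ q = 1) ∧
      Nonempty (((G ⧸ qcs q G 2) ⧸ Subgroup.normalClosure (K : Set (G ⧸ qcs q G 2))) ≃*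
        (Abelianization G ⧸ qPow (q ^ 2) (⊤ : Subgroup (Abelianization G)))) := by
  intro K hK
  have hc1 : commutator G ≤ qcs q G 1 := commutator_le_qcs_one q
  refine ⟨?_, ?_, ?_⟩
  · -- centrality
    intro x hx y
    rw [hK] at hx
    obtain ⟨g, hg, rfl⟩ := hx
    induction y using QuotientGroup.induction_on with
    | H h =>
      have : ((h * g : G) : G ⧸ qcs q G 2) = ((g * h : G) : G ⧸ qcs q G 2) := by
        rw [QuotientGroup.eq]
        have : (h * g)⁻¹ * (g * h) = pComm g h := by simp [pComm]; group
        rw [this]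
        exact mem_qcs_succ_comm q 1 (hc1 hg) h
      simpa [QuotientGroup.mk'_apply, ← QuotientGroup.mk_mul] using this.symm
  · -- exponent q
    intro x hx
    rw [hK] at hx
    obtain ⟨g, hg, rfl⟩ := hx
    rw [← map_pow, QuotientGroup.mk'_apply, QuotientGroup.eq_one_iff]
    exact mem_qcs_succ_pow q 1 (hc1 hg)
  · -- the isomorphism
    set M : Subgroup G := qcs q G 2 ⊔ commutator G with hM
    haveI : M.Normal := Subgroup.sup_normal _ _
    set A := Abelianization G ⧸ qPow (q ^ 2) (⊤ : Subgroup (Abelianization G)) with hA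
    set ψ : G →* A :=
      (QuotientGroup.mk' (qPow (q ^ 2) (⊤ : Subgroup (Abelianization G)))).comp
        Abelianization.of with hψ
    have hsurj : Function.Surjective ψ :=
      (QuotientGroup.mk'_surjective _).comp (QuotientGroup.mk'_surjective _)
    have hker_of : (Abelianization.of (G := G)).ker = commutator G := QuotientGroup.ker_mk' _
    have hq2 : ∀ g : G, ψ (g ^ (q ^ 2)) = 1 := by
      intro g
      rw [hψ, MonoidHom.comp_apply, map_pow, QuotientGroup.mk'_apply,
        QuotientGroup.eq_one_iff]
      exact Subgroup.subset_closure ⟨Abelianization.of g, Subgroup.mem_top _, rfl⟩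
    have hψcomm : ∀ a ∈ commutator G, ψ a = 1 := by
      intro a ha
      rw [hψ, MonoidHom.comp_apply]
      have : Abelianization.of a = 1 := by rw [← MonoidHom.mem_ker, hker_of]; exact ha
      rw [this, map_one]
    -- q-th powers of ψ of elements of qcs q G 1 vanish
    have hT : ∀ h ∈ qcs q G 1, ψ h ^ q = 1 := by
      have : qcs q G 1 ≤ (powMonoidHom q : A →* A).ker.comap ψ := by
        refine (Subgroup.closure_le _).2 ?_
        rintro _ (⟨g, -, rfl⟩ | ⟨g, -, g', rfl⟩)
        · refine Subgroup.mem_comap.2 ?_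
          rw [MonoidHom.mem_ker, powMonoidHom_apply]
          rw [← map_pow, ← pow_mul, ← pow_two]
          exact hq2 g
        · refine Subgroup.mem_comap.2 ?_
          rw [MonoidHom.mem_ker, powMonoidHom_apply]
          rw [hψcomm _ (pComm_mem_commutator g g'), one_pow]
      intro h hh
      exact this hh
    have hker : ψ.ker = M := by
      apply le_antisymm
      · -- ker ψ ≤ M
        have h1 : ψ.ker = (qPow (q ^ 2) ⊤).comap (Abelianization.of (G := G)) := by
          rw [hψ, ← MonoidHom.comap_ker, QuotientGroup.ker_mk']
        have h2 : qPow (q ^ 2) (⊤ : Subgroup (Abelianization G)) ≤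
            M.map (Abelianization.of (G := G)) := by
          refine (Subgroup.closure_le _).2 ?_
          rintro _ ⟨a, -, rfl⟩
          obtain ⟨g, rfl⟩ := QuotientGroup.mk'_surjective (commutator G) a
          refine ⟨g ^ (q ^ 2), ?_, by rw [map_pow]; rfl⟩
          have : g ^ (q ^ 2) = (g ^ q) ^ q := by rw [← pow_mul, pow_two]
          rw [this]
          exact le_sup_left (a := qcs q G 2)
            (mem_qcs_succ_pow q 1 (mem_qcs_succ_pow q 0 (Subgroup.mem_top g)))
        rw [h1]
        calc (qPow (q ^ 2) ⊤).comap (Abelianization.of (G := G))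
            ≤ (M.map (Abelianization.of (G := G))).comap (Abelianization.of (G := G)) :=
              Subgroup.comap_mono h2
          _ = M ⊔ (Abelianization.of (G := G)).ker := Subgroup.comap_map_eq _ _
          _ = M := by rw [hker_of, hM, sup_assoc, sup_idem]
      · -- M ≤ ker ψ
        refine sup_le ?_ ?_
        · refine (Subgroup.closure_le _).2 ?_
          rintro _ (⟨h, hh, rfl⟩ | ⟨h, -, g, rfl⟩)
          · show ψ (h ^ q) = 1
            rw [map_pow]
            exact hT h hh
          · exact hψcomm _ (pComm_mem_commutator h g)
        · intro a ha
          exact hψcomm a ha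
    haveI : K.Normal := by
      rw [hK]
      exact Subgroup.Normal.map inferInstance _ (QuotientGroup.mk'_surjective _)
    have hKM : Subgroup.map (QuotientGroup.mk' (qcs q G 2)) M = K := by
      rw [hM, Subgroup.map_sup, hK]
      have : (qcs q G 2).map (QuotientGroup.mk' (qcs q G 2)) = ⊥ := by
        rw [Subgroup.map_eq_bot_iff, QuotientGroup.ker_mk']
      rw [this, bot_sup_eq]
    have hNC : Subgroup.normalClosure (K : Set (G ⧸ qcs q G 2)) =
        Subgroup.map (QuotientGroup.mk' (qcs q G 2)) M := by
      rw [Subgroup.normalClosure_eq_self, hKM]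
    refine ⟨(QuotientGroup.quotientMulEquivOfEq hNC).trans
      ((QuotientGroup.quotientQuotientEquivQuotient (qcs q G 2) M le_sup_left).trans ?_)⟩
    exact (QuotientGroup.quotientMulEquivOfEq hker.symm).trans
      (QuotientGroup.quotientKerEquivOfSurjective ψ hsurj)
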